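/- arXiv:2302.02002 — 2 statements merged into one kernel-verified Lean document; each statement's English description precedes it below -/
import Mathlib

section
/- Let μ, λ > 0 and p, q, r, s ∈ ℤ with (p, q) ≠ (0, 0) and (r, s) ≠ (0, 0). Set u = (p·μ, q·λ) and v = (r·μ, s·λ) in ℝ². If u and v are orthogonal (i.e., p·r·μ² + q·s·λ² = 0) and ‖u‖·‖v‖ = μ·λ, then either (q = 0, r = 0, |p| = 1, |s| = 1) or (p = 0, s = 0, |q| = 1, |r| = 1). -/
set_option maxHeartbeats 1000000


/-- Core computation of Lemma 3.1: an orthogonal pair `u = (pμ, qλ)`, `v = (rμ, sλ)`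
of nonzero lattice vectors whose lengths multiply to `μλ` must coincide, up to sign
and order, with the original basis pair. -/
theorem stmt_3 (μ lam : ℝ) (hμ : 0 < μ) (hlam : 0 < lam) (p q r s : ℤ)
    (hpq : ¬(p = 0 ∧ q = 0)) (hrs : ¬(r = 0 ∧ s = 0))
    (horth : (p : ℝ) * r * μ ^ 2 + (q : ℝ) * s * lam ^ 2 = 0)
    (hprod : Real.sqrt (((p : ℝ) * μ) ^ 2 + ((q : ℝ) * lam) ^ 2) *
        Real.sqrt (((r : ℝ) * μ) ^ 2 + ((s : ℝ) * lam) ^ 2) = μ * lam) :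
    (q = 0 ∧ r = 0 ∧ |p| = 1 ∧ |s| = 1) ∨ (p = 0 ∧ s = 0 ∧ |q| = 1 ∧ |r| = 1) := by
  have hA : (0:ℝ) ≤ ((p : ℝ) * μ) ^ 2 + ((q : ℝ) * lam) ^ 2 := by positivity
  have hB : (0:ℝ) ≤ ((r : ℝ) * μ) ^ 2 + ((s : ℝ) * lam) ^ 2 := by positivity
  have key : (((p : ℝ) * μ) ^ 2 + ((q : ℝ) * lam) ^ 2) *
      (((r : ℝ) * μ) ^ 2 + ((s : ℝ) * lam) ^ 2) = (μ * lam) ^ 2 := by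
    rw [← Real.sq_sqrt hA, ← Real.sq_sqrt hB, ← mul_pow, hprod]
  have hX : (p : ℝ) * r * μ ^ 2 = -((q : ℝ) * s * lam ^ 2) := by linarith
  have hX2 : ((p : ℝ) * r * μ ^ 2) ^ 2 = ((q : ℝ) * s * lam ^ 2) ^ 2 := by
    rw [hX]; ring
  have hS : 2 * ((q : ℝ) * s * lam ^ 2) ^ 2
      = (1 - (((p * s : ℤ) : ℝ) ^ 2 + ((q * r : ℤ) : ℝ) ^ 2)) * (μ * lam) ^ 2 := by
    push_cast
    linear_combination key - hX2
  have hml : (0:ℝ) < (μ * lam) ^ 2 := by positivity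
  have hSle : ((p * s : ℤ) : ℝ) ^ 2 + ((q * r : ℤ) : ℝ) ^ 2 ≤ 1 := by
    nlinarith [sq_nonneg ((q : ℝ) * s * lam ^ 2)]
  have hSleZ : (p * s) ^ 2 + (q * r) ^ 2 ≤ 1 := by exact_mod_cast hSle
  have hSge : 0 ≤ (p * s) ^ 2 + (q * r) ^ 2 := by positivity
  -- the sum of squares is 0 or 1
  rcases (by omega : (p * s) ^ 2 + (q * r) ^ 2 = 0 ∨ (p * s) ^ 2 + (q * r) ^ 2 = 1) with h0 | h1
  · -- S = 0 : contradiction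
    exfalso
    have hps : p * s = 0 := by nlinarith [sq_nonneg (p * s), sq_nonneg (q * r)]
    have hqr : q * r = 0 := by nlinarith [sq_nonneg (p * s), sq_nonneg (q * r)]
    have hY2 : 2 * ((q : ℝ) * s * lam ^ 2) ^ 2 = (μ * lam) ^ 2 := by
      have : (((p * s : ℤ) : ℝ) ^ 2 + ((q * r : ℤ) : ℝ) ^ 2) = 0 := by
        rw [hps, hqr]; norm_num
      rw [hS, this]; ring
    have hYne : ((q : ℝ) * s * lam ^ 2) ≠ 0 := by
      intro h; rw [h] at hY2; simp at hY2; nlinarith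
    have hq : q ≠ 0 := by
      intro h; apply hYne; rw [h]; push_cast; ring
    have hs : s ≠ 0 := by
      intro h; apply hYne; rw [h]; push_cast; ring
    have hp : p = 0 := by
      rcases mul_eq_zero.mp hps with h | h
      · exact h
      · exact absurd h hs
    have hr : r = 0 := by
      rcases mul_eq_zero.mp hqr with h | h
      · exact absurd h hq
      · exact h
    apply hYne
    have : (p : ℝ) * r * μ ^ 2 = 0 := by rw [hp]; push_cast; ring
    rw [this] at hX
    linarith
  · -- S = 1 : Y = 0, X = 0
    have hY0 : ((q : ℝ) * s * lam ^ 2) = 0 := by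
      have : 2 * ((q : ℝ) * s * lam ^ 2) ^ 2 = 0 := by
        have hc : (((p * s : ℤ) : ℝ) ^ 2 + ((q * r : ℤ) : ℝ) ^ 2) = 1 := by
          exact_mod_cast congrArg (fun n : ℤ => (n : ℝ)) h1
        rw [hS, hc]; ring
      have := sq_eq_zero_iff.mp (by linarith : ((q : ℝ) * s * lam ^ 2) ^ 2 = 0)
      exact this
    have hqs : q * s = 0 := by
      have hlam2 : (lam : ℝ) ^ 2 ≠ 0 := by positivity
      have : ((q * s : ℤ) : ℝ) = 0 := by
        have := mul_eq_zero.mp hY0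
        rcases this with h | h
        · push_cast; exact h
        · exact absurd h hlam2
      exact_mod_cast this
    have hpr : p * r = 0 := by
      have hmu2 : (μ : ℝ) ^ 2 ≠ 0 := by positivity
      have hX0 : (p : ℝ) * r * μ ^ 2 = 0 := by rw [hX, hY0]; ring
      have : ((p * r : ℤ) : ℝ) = 0 := by
        rcases mul_eq_zero.mp hX0 with h | h
        · push_cast; exact h
        · exact absurd h hmu2
      exact_mod_cast this
    -- now (p*s)^2 + (q*r)^2 = 1 : one of them is 1
    have habs : ((p * s) ^ 2 = 1 ∧ q * r = 0) ∨ ((q * r) ^ 2 = 1 ∧ p * s = 0) := by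
      have h2 : (p * s) ^ 2 ≤ 1 := by nlinarith [sq_nonneg (q * r)]
      have h3 : -1 ≤ p * s := by nlinarith [sq_nonneg (p * s + 1)]
      have h4 : p * s ≤ 1 := by nlinarith [sq_nonneg (p * s - 1)]
      have hcases : (p * s) ^ 2 = 0 ∨ (p * s) ^ 2 = 1 := by
        rcases (by omega : p * s = -1 ∨ p * s = 0 ∨ p * s = 1) with h | h | h <;>
          rw [h] <;> norm_num
      rcases hcases with h | h
      · right
        exact ⟨by omega, sq_eq_zero_iff.mp h⟩
      · left
        exact ⟨h, sq_eq_zero_iff.mp (by omega)⟩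
    rcases habs with ⟨hps1, hqr0⟩ | ⟨hqr1, hps0⟩
    · -- |p| = |s| = 1, and q = 0, r = 0
      have hu : (p * s) * (p * s) = 1 := by nlinarith
      have := Int.isUnit_iff.mp (IsUnit.of_mul_eq_one _ hu)
      have habs' : |p| * |s| = 1 := by
        rw [← abs_mul]; rcases this with h | h <;> rw [h] <;> norm_num
      have hp1 : |p| = 1 ∧ |s| = 1 := by
        rcases (Int.mul_eq_one_iff_eq_one_or_neg_one.mp habs') with ⟨h1, h2⟩ | ⟨h1, h2⟩
        · exact ⟨h1, h2⟩
        · exfalso; have := abs_nonneg p; omega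
      have hpne : p ≠ 0 := by intro h; rw [h] at hp1; simp at hp1
      have hsne : s ≠ 0 := by intro h; rw [h] at hp1; simp at hp1
      have hr0 : r = 0 := by
        rcases mul_eq_zero.mp hpr with h | h
        · exact absurd h hpne
        · exact h
      have hq0 : q = 0 := by
        rcases mul_eq_zero.mp hqs with h | h
        · exact h
        · exact absurd h hsne
      exact Or.inl ⟨hq0, hr0, hp1.1, hp1.2⟩
    · have hu : (q * r) * (q * r) = 1 := by nlinarith
      have := Int.isUnit_iff.mp (IsUnit.of_mul_eq_one _ hu)
      have habs' : |q| * |r| = 1 := by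
        rw [← abs_mul]; rcases this with h | h <;> rw [h] <;> norm_num
      have hq1 : |q| = 1 ∧ |r| = 1 := by
        rcases (Int.mul_eq_one_iff_eq_one_or_neg_one.mp habs') with ⟨h1, h2⟩ | ⟨h1, h2⟩
        · exact ⟨h1, h2⟩
        · exfalso; have := abs_nonneg q; omega
      have hqne : q ≠ 0 := by intro h; rw [h] at hq1; simp at hq1
      have hrne : r ≠ 0 := by intro h; rw [h] at hq1; simp at hq1
      have hs0 : s = 0 := by
        rcases mul_eq_zero.mp hqs with h | h
        · exact absurd h hqne
        · exact h
      have hp0 : p = 0 := by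
        rcases mul_eq_zero.mp hpr with h | h
        · exact h
        · exact absurd h hrne
      exact Or.inr ⟨hp0, hs0, hq1.1, hq1.2⟩
end

section
/- Let μ, λ > 0 with p, q, r, s ∈ ℤ, u = (p·μ, q·λ), v = (r·μ, s·λ), u and v orthogonal and both nonzero, and suppose p ≠ 0 and q ≠ 0. Then ‖u‖·‖v‖ > μ·λ. -/
/-- If the slope `u = (pμ, qλ)` has both coefficients nonzero, then for any nonzero
orthogonal slope `v = (rμ, sλ)` the product of lengths strictly exceeds `μλ`. -/
theorem stmt_17 (μ lam : ℝ) (hμ : 0 < μ) (hlam : 0 < lam) (p q r s : ℤ)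
    (horth : (p : ℝ) * r * μ ^ 2 + (q : ℝ) * s * lam ^ 2 = 0)
    (hu : ¬(p = 0 ∧ q = 0)) (hv : ¬(r = 0 ∧ s = 0))
    (hp : p ≠ 0) (hq : q ≠ 0) :
    μ * lam < Real.sqrt (((p : ℝ) * μ) ^ 2 + ((q : ℝ) * lam) ^ 2) *
        Real.sqrt (((r : ℝ) * μ) ^ 2 + ((s : ℝ) * lam) ^ 2) := by
  have hqR : (q : ℝ) ≠ 0 := Int.cast_ne_zero.mpr hq
  have hpR : (p : ℝ) ≠ 0 := Int.cast_ne_zero.mpr hp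
  have hrs : r ≠ 0 ∧ s ≠ 0 := by
    constructor
    · rintro rfl
      have h : (q : ℝ) * s * lam ^ 2 = 0 := by simpa using horth
      have hs0 : (s : ℝ) = 0 := by
        rcases mul_eq_zero.mp h with h' | h'
        · rcases mul_eq_zero.mp h' with h'' | h''
          exacts [absurd h'' hqR, h'']
        · exact absurd h' (pow_ne_zero 2 (ne_of_gt hlam))
      have : s = 0 := by exact_mod_cast hs0
      exact hv ⟨rfl, this⟩
    · rintro rfl
      have h : (p : ℝ) * r * μ ^ 2 = 0 := by simpa using horth
      have hr0 : (r : ℝ) = 0 := by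
        rcases mul_eq_zero.mp h with h' | h'
        · rcases mul_eq_zero.mp h' with h'' | h''
          exacts [absurd h'' hpR, h'']
        · exact absurd h' (pow_ne_zero 2 (ne_of_gt hμ))
      have : r = 0 := by exact_mod_cast hr0
      exact hv ⟨this, rfl⟩
  obtain ⟨hr, hs⟩ := hrs
  have h1 : (1 : ℝ) ≤ |(p : ℝ)| := by exact_mod_cast Int.one_le_abs hp
  have h2 : (1 : ℝ) ≤ |(q : ℝ)| := by exact_mod_cast Int.one_le_abs hq
  have h3 : (1 : ℝ) ≤ |(r : ℝ)| := by exact_mod_cast Int.one_le_abs hr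
  have h4 : (1 : ℝ) ≤ |(s : ℝ)| := by exact_mod_cast Int.one_le_abs hs
  have hp2 : (1 : ℝ) ≤ (p : ℝ) ^ 2 := by nlinarith [sq_abs (p : ℝ)]
  have hq2 : (1 : ℝ) ≤ (q : ℝ) ^ 2 := by nlinarith [sq_abs (q : ℝ)]
  have hr2 : (1 : ℝ) ≤ (r : ℝ) ^ 2 := by nlinarith [sq_abs (r : ℝ)]
  have hs2 : (1 : ℝ) ≤ (s : ℝ) ^ 2 := by nlinarith [sq_abs (s : ℝ)]
  have key : μ ^ 2 + lam ^ 2 ≤ ((p : ℝ) * μ) ^ 2 + ((q : ℝ) * lam) ^ 2 := by nlinarith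
  have key2 : μ ^ 2 + lam ^ 2 ≤ ((r : ℝ) * μ) ^ 2 + ((s : ℝ) * lam) ^ 2 := by nlinarith
  have hpos : (0 : ℝ) ≤ μ ^ 2 + lam ^ 2 := by positivity
  have b1 : Real.sqrt (μ ^ 2 + lam ^ 2) ≤ Real.sqrt (((p : ℝ) * μ) ^ 2 + ((q : ℝ) * lam) ^ 2) :=
    Real.sqrt_le_sqrt key
  have b2 : Real.sqrt (μ ^ 2 + lam ^ 2) ≤ Real.sqrt (((r : ℝ) * μ) ^ 2 + ((s : ℝ) * lam) ^ 2) :=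
    Real.sqrt_le_sqrt key2
  have hmul : μ ^ 2 + lam ^ 2 ≤ Real.sqrt (((p : ℝ) * μ) ^ 2 + ((q : ℝ) * lam) ^ 2) *
      Real.sqrt (((r : ℝ) * μ) ^ 2 + ((s : ℝ) * lam) ^ 2) := by
    calc μ ^ 2 + lam ^ 2 = Real.sqrt (μ ^ 2 + lam ^ 2) * Real.sqrt (μ ^ 2 + lam ^ 2) := by
          rw [Real.mul_self_sqrt hpos]
      _ ≤ _ := mul_le_mul b1 b2 (Real.sqrt_nonneg _) (Real.sqrt_nonneg _)
  nlinarith [sq_nonneg (μ - lam)]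
end
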